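/- Let A be a positive-definite n×n real matrix and q ∈ ℝⁿ with q ≥ 0, q ≠ 0. If v⋆ minimizes v ↦ ⟨v, A⁻¹ v⟩ over the set {v : v ≥ q}, then the vector w⋆ := A⁻¹ v⋆ satisfies w⋆ ≥ 0, and ⟨A⁻¹ v⋆, q − v⋆⟩ = 0; moreover for each coordinate i, if (A⁻¹ v⋆)_i > 0 then v⋆_i = q_i. -/

import Mathlib

open Matrix

theorem kkt_complementary_slackness (n : ℕ) (A : Matrix (Fin n) (Fin n) ℝ)
    (hA : A.PosDef) (q : Fin n → ℝ) (hq : 0 ≤ q) (hq0 : q ≠ 0)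
    (vstar : Fin n → ℝ) (hvs : q ≤ vstar)
    (hmin : IsMinOn (fun v : Fin n → ℝ => v ⬝ᵥ A⁻¹.mulVec v) {v | q ≤ v} vstar) :
    0 ≤ A⁻¹.mulVec vstar ∧
    (A⁻¹.mulVec vstar) ⬝ᵥ (q - vstar) = 0 ∧
    (∀ i : Fin n, 0 < (A⁻¹.mulVec vstar) i → vstar i = q i) := by
  have hB : (A⁻¹).PosDef := hA.inv
  set B := A⁻¹ with hBdef
  have hsym : ∀ i j, B i j = B j i := by
    intro i j
    have h2 := congrFun (congrFun hB.isHermitian j) i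
    simpa [Matrix.conjTranspose_apply] using h2
  have hdiag : ∀ i, 0 < B i i := by
    intro i
    have hne : (Pi.single i 1 : Fin n → ℝ) ≠ 0 := by
      intro h; simpa using congrFun h i
    have := hB.dotProduct_mulVec_pos hne
    simpa [single_dotProduct, Matrix.mulVec_single] using this
  have key : ∀ i t, q i - vstar i ≤ t →
      0 ≤ 2 * t * (B.mulVec vstar i) + t^2 * B i i := by
    intro i t ht
    have hmem : (vstar + Pi.single i t) ∈ {v : Fin n → ℝ | q ≤ v} := by
      intro j
      rcases eq_or_ne j i with hj | hj
      · subst hj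
        simp only [Pi.add_apply, Pi.single_eq_same]
        linarith
      · simpa [Pi.single_eq_of_ne hj] using hvs j
    have hle := isMinOn_iff.mp hmin _ hmem
    have h1 : (Pi.single i t : Fin n → ℝ) ⬝ᵥ B.mulVec vstar = t * B.mulVec vstar i :=
      single_dotProduct _ _ _
    have h2 : vstar ⬝ᵥ B.mulVec (Pi.single i t) = t * B.mulVec vstar i := by
      rw [Matrix.mulVec_single]
      simp only [dotProduct, Matrix.mulVec, Finset.mul_sum, Pi.smul_apply, Matrix.col_apply,
        op_smul_eq_mul]
      exact Finset.sum_congr rfl fun j _ => by rw [hsym i j]; ring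
    have h3 : (Pi.single i t : Fin n → ℝ) ⬝ᵥ B.mulVec (Pi.single i t) = t^2 * B i i := by
      rw [Matrix.mulVec_single, single_dotProduct]
      simp only [Pi.smul_apply, Matrix.col_apply, op_smul_eq_mul]
      ring
    have expand : (vstar + Pi.single i t) ⬝ᵥ B.mulVec (vstar + Pi.single i t)
        = vstar ⬝ᵥ B.mulVec vstar + (2 * t * (B.mulVec vstar i) + t^2 * B i i) := by
      rw [Matrix.mulVec_add, add_dotProduct, dotProduct_add,
        dotProduct_add, h1, h2, h3]
      ring
    simp only [expand] at hle
    linarith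
  have hw : ∀ i, 0 ≤ B.mulVec vstar i := by
    intro i
    by_contra hneg
    push_neg at hneg
    set w := B.mulVec vstar i with hwdef
    set c := B i i with hcdef
    have hc : 0 < c := hdiag i
    have ht0 : 0 < -w / c := div_pos (neg_pos.mpr hneg) hc
    have ht : q i - vstar i ≤ -w / c := le_trans (by linarith [hvs i]) ht0.le
    have h := key i (-w/c) ht
    have h2 : (-w/c)^2 * c = (-w/c) * (-w) := by
      field_simp
    have h3 : 2*(-w/c)*w + (-w/c) * (-w) = -((-w/c)*(-w)) := by ring
    have h4 : 0 < (-w/c) * (-w) := mul_pos ht0 (neg_pos.mpr hneg)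
    rw [h2] at h
    linarith
  have hslack : ∀ i, q i < vstar i → B.mulVec vstar i = 0 := by
    intro i hlt
    rcases eq_or_lt_of_le (hw i) with h | h
    · exact h.symm
    exfalso
    set w := B.mulVec vstar i with hwdef
    set c := B i i with hcdef
    have hc : 0 < c := hdiag i
    set t := max (q i - vstar i) (-(w / c)) with htdef
    have ht1 : q i - vstar i ≤ t := le_max_left _ _
    have ht2 : -(w / c) ≤ t := le_max_right _ _
    have htneg : t < 0 := by
      apply max_lt (by linarith)
      have : 0 < w / c := div_pos h hc
      linarith
    have hkey := key i t ht1
    have htc : -w ≤ t * c := by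
      have := mul_le_mul_of_nonneg_right ht2 hc.le
      rwa [neg_mul, div_mul_cancel₀ _ hc.ne'] at this
    have h1 : t^2 * c = t * (t*c) := by ring
    have h2 : t * (t*c) ≤ t * (-w) := mul_le_mul_of_nonpos_left htc htneg.le
    have h3 : t * w < 0 := mul_neg_of_neg_of_pos htneg h
    rw [h1] at hkey
    nlinarith
  refine ⟨fun i => hw i, ?_, ?_⟩
  · rw [dotProduct]
    apply Finset.sum_eq_zero
    intro i _
    rcases eq_or_lt_of_le (hvs i) with h | h
    · simp [Pi.sub_apply, ← h]
    · rw [hslack i h, zero_mul]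
  · intro i hpos
    by_contra hne
    have hlt : q i < vstar i := lt_of_le_of_ne (hvs i) (Ne.symm hne)
    rw [hslack i hlt] at hpos
    exact lt_irrefl _ hpos
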